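/- arXiv:1603.03124 — 4 statements merged into one kernel-verified Lean document; each statement's English description precedes it below -/
import Mathlib

section
/- Let x : [0,∞) → ℝ² be continuous with respect to the tree-metric ρ, and suppose 0 ≤ t₁ ≤ t₂ are such that ‖x(t)‖ ≠ 0 holds for all t ∈ [t₁,t₂]. Then the normalized position is constant on this interval: x(t)/‖x(t)‖ = x(t₁)/‖x(t₁)‖ for every t ∈ [t₁,t₂]. -/
open scoped Classical

/-- Two points of the plane lie on the same ray emanating from the origin. -/
def OnSameRay (x y : EuclideanSpace ℝ (Fin 2)) : Prop :=
  x = 0 ∨ y = 0 ∨ ∃ t : ℝ, 0 < t ∧ y = t • x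

/-- The tree-metric on the plane. -/
noncomputable def treeDist (x y : EuclideanSpace ℝ (Fin 2)) : ℝ :=
  if OnSameRay x y then |‖x‖ - ‖y‖| else ‖x‖ + ‖y‖

/-- A path `x : [0,∞) → ℝ²` that is continuous with respect to the tree-metric and
does not visit the origin on `[t₁,t₂]` has constant normalized position there. -/
theorem constant_ray_of_treeContinuous (x : ℝ → EuclideanSpace ℝ (Fin 2))
    (hcont : ∀ t : ℝ, 0 ≤ t → ∀ ε > (0:ℝ), ∃ δ > (0:ℝ),
      ∀ s : ℝ, 0 ≤ s → |s - t| < δ → treeDist (x s) (x t) < ε)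
    (t₁ t₂ : ℝ) (ht₁ : 0 ≤ t₁) (ht₁₂ : t₁ ≤ t₂)
    (hne : ∀ t ∈ Set.Icc t₁ t₂, ‖x t‖ ≠ 0) :
    ∀ t ∈ Set.Icc t₁ t₂, ‖x t‖⁻¹ • x t = ‖x t₁‖⁻¹ • x t₁ := by
  set f : ℝ → EuclideanSpace ℝ (Fin 2) := fun t => ‖x t‖⁻¹ • x t with hf
  -- local constancy of f on Icc
  have key : ∀ t ∈ Set.Icc t₁ t₂, ∃ δ > (0:ℝ),
      ∀ s ∈ Set.Icc t₁ t₂, |s - t| < δ → f s = f t := by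
    intro t ht
    have htnorm : (0:ℝ) < ‖x t‖ := lt_of_le_of_ne (norm_nonneg _) (Ne.symm (hne t ht))
    obtain ⟨δ, hδpos, hδ⟩ := hcont t (le_trans ht₁ ht.1) ‖x t‖ htnorm
    refine ⟨δ, hδpos, fun s hs hsδ => ?_⟩
    have hd := hδ s (le_trans ht₁ hs.1) hsδ
    have hray : OnSameRay (x s) (x t) := by
      by_contra hnot
      rw [treeDist, if_neg hnot] at hd
      have := norm_nonneg (x s)
      linarith
    rcases hray with h0 | h0 | ⟨c, hc, hxt⟩
    · exact absurd (by rw [h0, norm_zero]) (hne s hs)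
    · exact absurd (by rw [h0, norm_zero]) (hne t ht)
    · have hsnorm : (0:ℝ) < ‖x s‖ := lt_of_le_of_ne (norm_nonneg _) (Ne.symm (hne s hs))
      simp only [hf, hxt, norm_smul, Real.norm_eq_abs, abs_of_pos hc, smul_smul]
      congr 1
      field_simp
  by_contra hcontra
  push_neg at hcontra
  obtain ⟨t₀, ht₀, ht₀ne⟩ := hcontra
  choose δ hδpos hδ using key
  -- open sets
  set U : Set ℝ := ⋃ (t : ℝ) (h : t ∈ Set.Icc t₁ t₂ ∧ f t = f t₁), Metric.ball t (δ t h.1) with hU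
  set V : Set ℝ := ⋃ (t : ℝ) (h : t ∈ Set.Icc t₁ t₂ ∧ f t ≠ f t₁), Metric.ball t (δ t h.1) with hV
  have hUopen : IsOpen U := isOpen_iUnion fun t => isOpen_iUnion fun h => Metric.isOpen_ball
  have hVopen : IsOpen V := isOpen_iUnion fun t => isOpen_iUnion fun h => Metric.isOpen_ball
  have hpre : IsPreconnected (Set.Icc t₁ t₂) := isPreconnected_Icc
  have hsub : Set.Icc t₁ t₂ ⊆ U ∪ V := by
    intro t ht
    by_cases h : f t = f t₁
    · exact Or.inl (Set.mem_iUnion₂.2 ⟨t, ⟨ht, h⟩, Metric.mem_ball_self (hδpos t ht)⟩)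
    · exact Or.inr (Set.mem_iUnion₂.2 ⟨t, ⟨ht, h⟩, Metric.mem_ball_self (hδpos t ht)⟩)
  have ht₁mem : t₁ ∈ Set.Icc t₁ t₂ := ⟨le_refl _, ht₁₂⟩
  have hUne : (Set.Icc t₁ t₂ ∩ U).Nonempty :=
    ⟨t₁, ht₁mem, Set.mem_iUnion₂.2 ⟨t₁, ⟨ht₁mem, rfl⟩, Metric.mem_ball_self (hδpos t₁ ht₁mem)⟩⟩
  have hVne : (Set.Icc t₁ t₂ ∩ V).Nonempty :=
    ⟨t₀, ht₀, Set.mem_iUnion₂.2 ⟨t₀, ⟨ht₀, ht₀ne⟩, Metric.mem_ball_self (hδpos t₀ ht₀)⟩⟩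
  obtain ⟨r, hr, hrU, hrV⟩ := hpre U V hUopen hVopen hsub hUne hVne
  obtain ⟨a, ⟨ha, hfa⟩, hra⟩ := Set.mem_iUnion₂.1 hrU
  obtain ⟨b, ⟨hb, hfb⟩, hrb⟩ := Set.mem_iUnion₂.1 hrV
  have h1 : f r = f a := hδ a ha r hr (by rw [Metric.mem_ball, Real.dist_eq] at hra; exact hra)
  have h2 : f r = f b := hδ b hb r hr (by rw [Metric.mem_ball, Real.dist_eq] at hrb; exact hrb)
  exact hfb (h2 ▸ h1 ▸ hfa)
end

section
/- Let g : ℝ² → ℝ satisfy: for every θ ∈ [0,2π) the function r ↦ g_θ(r) is differentiable on [0,∞) and its derivative g′_θ satisfies g′_θ(r) = g′_θ(0) + ∫₀^r g″_θ(y) dy for some locally Lebesgue-integrable function g″_θ on [0,∞); the function θ ↦ g′_θ(0) is bounded on [0,2π); and there exist η > 0 and a Lebesgue-integrable function c : (0,η] → [0,∞) such that |g″_θ(r)| ≤ c(r) for all θ ∈ [0,2π) and r ∈ (0,η]. Then g is continuous with respect to the tree-metric ρ (in particular, g(x) → g(0) as ρ(x,0) → 0). -/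
open MeasureTheory
open scoped Classical

/-- The point of the plane with polar coordinates `(r, θ)`. -/
noncomputable def polar (r θ : ℝ) : EuclideanSpace ℝ (Fin 2) :=
  (WithLp.equiv 2 (Fin 2 → ℝ)).symm ![r * Real.cos θ, r * Real.sin θ]

lemma polar_zero (θ : ℝ) : polar 0 θ = 0 := by
  ext i
  fin_cases i <;> simp [polar]

lemma norm_polar (r θ : ℝ) (hr : 0 ≤ r) : ‖polar r θ‖ = r := by
  rw [EuclideanSpace.norm_eq]
  rw [Fin.sum_univ_two]
  have h0 : polar r θ 0 = r * Real.cos θ := rfl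
  have h1 : polar r θ 1 = r * Real.sin θ := rfl
  rw [h0, h1]
  have : ‖r * Real.cos θ‖ ^ 2 + ‖r * Real.sin θ‖ ^ 2 = r ^ 2 := by
    rw [Real.norm_eq_abs, Real.norm_eq_abs, sq_abs, sq_abs]
    have := Real.sin_sq_add_cos_sq θ
    ring_nf
    nlinarith [Real.sin_sq_add_cos_sq θ]
  rw [this, Real.sqrt_sq hr]

lemma smul_polar (t r θ : ℝ) : t • polar r θ = polar (t * r) θ := by
  ext i
  fin_cases i <;>
    simp [polar, PiLp.smul_apply] <;> ring

lemma exists_polar_rep (x : EuclideanSpace ℝ (Fin 2)) (hx : x ≠ 0) :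
    ∃ θ ∈ Set.Ico (0:ℝ) (2 * Real.pi), x = polar ‖x‖ θ := by
  set z : ℂ := ⟨x 0, x 1⟩ with hzdef
  have hz : z ≠ 0 := by
    intro h
    apply hx
    have h0 : x 0 = 0 := congrArg Complex.re h
    have h1 : x 1 = 0 := congrArg Complex.im h
    ext i
    fin_cases i <;> simpa
  have habs : ‖z‖ = ‖x‖ := by
    rw [EuclideanSpace.norm_eq, Fin.sum_univ_two, Complex.norm_def, Complex.normSq_apply]
    congr 1
    simp [Real.norm_eq_abs, sq_abs, hzdef]
    ring
  have habs_pos : (0:ℝ) < ‖z‖ := norm_pos_iff.mpr hz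
  set θ : ℝ := if 0 ≤ z.arg then z.arg else z.arg + 2 * Real.pi with hθdef
  have hcos : Real.cos θ = Real.cos z.arg := by
    rw [hθdef]; split
    · rfl
    · rw [Real.cos_add_two_pi]
  have hsin : Real.sin θ = Real.sin z.arg := by
    rw [hθdef]; split
    · rfl
    · rw [Real.sin_add_two_pi]
  have harg := Complex.arg_mem_Ioc z
  refine ⟨θ, ?_, ?_⟩
  · constructor
    · rw [hθdef]; split
      · assumption
      · nlinarith [Real.pi_pos, harg.1]
    · rw [hθdef]; split
      · nlinarith [Real.pi_pos, harg.2]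
      · linarith [harg.2, not_le.mp (by assumption : ¬ 0 ≤ z.arg)]
  · have hc := Complex.cos_arg hz
    have hs := Complex.sin_arg z
    ext i
    fin_cases i
    · show x 0 = ‖x‖ * Real.cos θ
      rw [hcos, hc, ← habs]
      field_simp
      rfl
    · show x 1 = ‖x‖ * Real.sin θ
      rw [hsin, hs, ← habs]
      field_simp
      rfl

/-- A function `g : ℝ² → ℝ` which is, along each ray, differentiable with an absolutely
continuous derivative, whose radial derivatives at the origin are bounded in the angle,
and whose second radial derivatives are dominated near the origin by an integrable
function of the radius, is continuous with respect to the tree-metric. -/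
theorem treeContinuous_of_classD (g : EuclideanSpace ℝ (Fin 2) → ℝ)
    (g' g'' : ℝ → ℝ → ℝ)
    (hderiv : ∀ θ ∈ Set.Ico (0:ℝ) (2 * Real.pi), ∀ r : ℝ, 0 ≤ r →
      HasDerivWithinAt (fun u => g (polar u θ)) (g' θ r) (Set.Ici 0) r)
    (hloc : ∀ θ ∈ Set.Ico (0:ℝ) (2 * Real.pi), ∀ R : ℝ, 0 ≤ R →
      IntegrableOn (g'' θ) (Set.Icc 0 R))
    (hftc : ∀ θ ∈ Set.Ico (0:ℝ) (2 * Real.pi), ∀ r : ℝ, 0 ≤ r →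
      g' θ r = g' θ 0 + ∫ y in (0:ℝ)..r, g'' θ y)
    (hbdd : ∃ C : ℝ, ∀ θ ∈ Set.Ico (0:ℝ) (2 * Real.pi), |g' θ 0| ≤ C)
    (η : ℝ) (hη : 0 < η) (c : ℝ → ℝ)
    (hc0 : ∀ y ∈ Set.Ioc (0:ℝ) η, 0 ≤ c y)
    (hcint : IntegrableOn c (Set.Ioc 0 η))
    (hcdom : ∀ θ ∈ Set.Ico (0:ℝ) (2 * Real.pi), ∀ r ∈ Set.Ioc (0:ℝ) η,
      |g'' θ r| ≤ c r) :
    ∀ x : EuclideanSpace ℝ (Fin 2), ∀ ε > (0:ℝ), ∃ δ > (0:ℝ),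
      ∀ y : EuclideanSpace ℝ (Fin 2), treeDist x y < δ → |g y - g x| < ε := by
  intro x ε hε
  obtain ⟨C, hC⟩ := hbdd
  have hπ : (0:ℝ) < 2 * Real.pi := by positivity
  have hC0 : 0 ≤ C := le_trans (abs_nonneg _) (hC 0 ⟨le_refl 0, hπ⟩)
  set I : ℝ := ∫ y in Set.Ioc (0:ℝ) η, c y with hIdef
  have hI0 : 0 ≤ I := setIntegral_nonneg measurableSet_Ioc hc0
  set M : ℝ := C + I with hMdef
  have hM0 : 0 ≤ M := add_nonneg hC0 hI0
  -- key estimate near the origin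
  have key : ∀ θ ∈ Set.Ico (0:ℝ) (2 * Real.pi), ∀ r : ℝ, 0 ≤ r → r ≤ η →
      |g (polar r θ) - g 0| ≤ M * r := by
    intro θ hθ r hr0 hrη
    have hbound : ∀ u ∈ Set.Icc (0:ℝ) r, |g' θ u| ≤ M := by
      intro u hu
      have huη : u ≤ η := le_trans hu.2 hrη
      rw [hftc θ hθ u hu.1]
      have h1 : |∫ y in (0:ℝ)..u, g'' θ y| ≤ ∫ y in Set.Ioc (0:ℝ) u, |g'' θ y| :=
        calc |∫ y in (0:ℝ)..u, g'' θ y| ≤ ∫ y in (0:ℝ)..u, |g'' θ y| :=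
              intervalIntegral.abs_integral_le_integral_abs hu.1
          _ = ∫ y in Set.Ioc (0:ℝ) u, |g'' θ y| := intervalIntegral.integral_of_le hu.1
      have hint : IntegrableOn (fun y => |g'' θ y|) (Set.Ioc 0 u) :=
        ((hloc θ hθ u hu.1).mono_set Set.Ioc_subset_Icc_self).abs
      have h2 : (∫ y in Set.Ioc (0:ℝ) u, |g'' θ y|) ≤ ∫ y in Set.Ioc (0:ℝ) u, c y := by
        apply setIntegral_mono_on hint (hcint.mono_set (Set.Ioc_subset_Ioc_right huη))
          measurableSet_Ioc
        intro y hy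
        exact hcdom θ hθ y ⟨hy.1, le_trans hy.2 huη⟩
      have h3 : (∫ y in Set.Ioc (0:ℝ) u, c y) ≤ I := by
        apply setIntegral_mono_set hcint
        · exact (ae_restrict_iff' measurableSet_Ioc).mpr (ae_of_all _ hc0)
        · exact HasSubset.Subset.eventuallyLE (Set.Ioc_subset_Ioc_right huη)
      calc |g' θ 0 + ∫ y in (0:ℝ)..u, g'' θ y|
          ≤ |g' θ 0| + |∫ y in (0:ℝ)..u, g'' θ y| := abs_add_le _ _
        _ ≤ C + I := add_le_add (hC θ hθ) (le_trans h1 (le_trans h2 h3))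
    have hmvt := Convex.norm_image_sub_le_of_norm_hasDerivWithin_le
      (f := fun u => g (polar u θ)) (f' := g' θ) (s := Set.Icc (0:ℝ) r)
      (fun u hu => (hderiv θ hθ u hu.1).mono Set.Icc_subset_Ici_self)
      (fun u hu => hbound u hu) (convex_Icc 0 r)
      (Set.left_mem_Icc.mpr hr0) (Set.right_mem_Icc.mpr hr0)
    simpa [polar_zero, Real.norm_eq_abs, abs_of_nonneg hr0] using hmvt
  by_cases hx : x = 0
  · subst hx
    refine ⟨min η (ε / (M + 1)), lt_min hη (by positivity), ?_⟩
    intro y hy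
    have htd : treeDist 0 y = ‖y‖ := by
      rw [treeDist, if_pos (show OnSameRay 0 y from Or.inl rfl)]
      simp
    rw [htd] at hy
    by_cases hy0 : y = 0
    · simpa [hy0] using hε
    · obtain ⟨θ, hθ, hrep⟩ := exists_polar_rep y hy0
      have h1 : ‖y‖ ≤ η := le_of_lt (lt_of_lt_of_le hy (min_le_left _ _))
      have h2 : ‖y‖ < ε / (M + 1) := lt_of_lt_of_le hy (min_le_right _ _)
      have hk := key θ hθ ‖y‖ (norm_nonneg y) h1
      rw [← hrep] at hk
      have : M * ‖y‖ < ε := by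
        have h3 : ‖y‖ * (M + 1) < ε := by
          rw [lt_div_iff₀ (by positivity)] at h2
          exact h2
        nlinarith [norm_nonneg y]
      calc |g y - g 0| ≤ M * ‖y‖ := hk
        _ < ε := this
  · have hx0 : (0:ℝ) < ‖x‖ := norm_pos_iff.mpr hx
    obtain ⟨θ, hθ, hrep⟩ := exists_polar_rep x hx
    have hcont : ContinuousWithinAt (fun u => g (polar u θ)) (Set.Ici 0) ‖x‖ :=
      (hderiv θ hθ ‖x‖ (norm_nonneg x)).continuousWithinAt
    rw [Metric.continuousWithinAt_iff] at hcont
    obtain ⟨δ', hδ', H⟩ := hcont ε hε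
    refine ⟨min δ' ‖x‖, lt_min hδ' hx0, ?_⟩
    intro y hy
    rw [treeDist] at hy
    by_cases hray : OnSameRay x y
    · rw [if_pos hray] at hy
      rcases hray with h | h | ⟨t, ht, hyt⟩
      · exact absurd h hx
      · exfalso
        rw [h] at hy
        simp only [norm_zero, sub_zero, abs_of_pos hx0] at hy
        have := min_le_right δ' ‖x‖
        linarith
      · have hyx : ‖y‖ = t * ‖x‖ := by
          rw [hyt, norm_smul, Real.norm_eq_abs, abs_of_pos ht]
        have hrepy : y = polar ‖y‖ θ := by
          rw [hyx, hyt]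
          conv_lhs => rw [hrep]
          rw [smul_polar]
        have hdist : dist ‖y‖ ‖x‖ < δ' := by
          rw [Real.dist_eq]
          calc |‖y‖ - ‖x‖| = |‖x‖ - ‖y‖| := abs_sub_comm _ _
            _ < min δ' ‖x‖ := hy
            _ ≤ δ' := min_le_left _ _
        have := H (Set.mem_Ici.mpr (norm_nonneg y)) hdist
        rw [Real.dist_eq] at this
        calc |g y - g x| = |g (polar ‖y‖ θ) - g (polar ‖x‖ θ)| := by rw [← hrepy, ← hrep]
          _ < ε := this
    · rw [if_neg hray] at hy
      exfalso
      have h1 := min_le_right δ' ‖x‖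
      have h2 := norm_nonneg y
      linarith
end

section
/- For every constant c ≥ U(0): the defining infimum for U⁽ᶜ⁾ is taken over a nonempty family; U⁽ᶜ⁾ is itself p-concave; U⁽ᶜ⁾ is continuous on [0,1]; U⁽ᶜ⁾(r) ≥ U(r) for all r ∈ [0,1]; U⁽ᶜ⁾(0) = c; and U⁽ᶜ⁾(1) = U(1). -/
open scoped Classical

/-- A function `φ : [0,1] → ℝ` is `p`-concave if `φ = ψ ∘ p` on `[0,1]` for some
continuous concave function `ψ : [0, p(1)] → ℝ`. -/
def PConcave (p φ : ℝ → ℝ) : Prop :=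
  ∃ ψ : ℝ → ℝ, ContinuousOn ψ (Set.Icc 0 (p 1)) ∧ ConcaveOn ℝ (Set.Icc 0 (p 1)) ψ ∧
    ∀ r ∈ Set.Icc (0:ℝ) 1, φ r = ψ (p r)

/-- `U⁽ᶜ⁾(r)`: the pointwise infimum over all `p`-concave majorants `φ` of `U` on `[0,1]`
with `φ(0) ≥ c`. -/
noncomputable def Uc (p U : ℝ → ℝ) (c r : ℝ) : ℝ :=
  sInf {y : ℝ | ∃ φ : ℝ → ℝ, PConcave p φ ∧ (∀ t ∈ Set.Icc (0:ℝ) 1, U t ≤ φ t) ∧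
    c ≤ φ 0 ∧ y = φ r}

/-- A concave function on `[0,L]` has a supporting line at every interior point. -/
lemma exists_support_line {L : ℝ} (ψ : ℝ → ℝ) (hψ : ConcaveOn ℝ (Set.Icc 0 L) ψ)
    {x0 : ℝ} (hx0 : x0 ∈ Set.Ioo 0 L) :
    ∃ K : ℝ, ∀ z ∈ Set.Icc 0 L, ψ z ≤ ψ x0 + K * (z - x0) := by
  obtain ⟨hx0l, hx0r⟩ := hx0
  have hLmem : L ∈ Set.Icc 0 L := ⟨le_of_lt (lt_trans hx0l hx0r), le_refl L⟩
  have h0mem : (0:ℝ) ∈ Set.Icc 0 L := ⟨le_refl 0, le_of_lt (lt_trans hx0l hx0r)⟩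
  set S : Set ℝ := {s : ℝ | ∃ y ∈ Set.Ioc x0 L, s = (ψ y - ψ x0) / (y - x0)} with hS
  have hSne : S.Nonempty := ⟨(ψ L - ψ x0) / (L - x0), L, ⟨hx0r, le_refl L⟩, rfl⟩
  have hSbdd : BddAbove S := by
    refine ⟨(ψ x0 - ψ 0) / (x0 - 0), ?_⟩
    rintro s ⟨y, hy, rfl⟩
    exact hψ.slope_anti_adjacent h0mem ⟨le_trans h0mem.1 (le_of_lt (lt_trans hx0l hy.1)), hy.2⟩
      hx0l hy.1
  set K := sSup S with hK
  refine ⟨K, fun z hz => ?_⟩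
  rcases lt_trichotomy z x0 with h | h | h
  · have hub : ∀ s ∈ S, s ≤ (ψ x0 - ψ z) / (x0 - z) := by
      rintro s ⟨y, hy, rfl⟩
      exact hψ.slope_anti_adjacent hz ⟨le_trans hz.1 (le_of_lt (lt_trans h hy.1)), hy.2⟩ h hy.1
    have hKle : K ≤ (ψ x0 - ψ z) / (x0 - z) := csSup_le hSne hub
    have hpos : 0 < x0 - z := by linarith
    have := (le_div_iff₀ hpos).1 hKle
    nlinarith
  · subst h; simp
  · have hmem : (ψ z - ψ x0) / (z - x0) ∈ S := ⟨z, ⟨h, hz.2⟩, rfl⟩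
    have hle : (ψ z - ψ x0) / (z - x0) ≤ K := le_csSup hSbdd hmem
    have hpos : 0 < z - x0 := by linarith
    have := (div_le_iff₀ hpos).1 hle
    nlinarith

open Set in
/-- For every `c ≥ U(0)`: the family defining `U⁽ᶜ⁾` is nonempty, `U⁽ᶜ⁾` is itself
`p`-concave, continuous on `[0,1]`, majorizes `U`, and satisfies `U⁽ᶜ⁾(0) = c` and
`U⁽ᶜ⁾(1) = U(1)`. -/
theorem Uc_basic_properties (p U : ℝ → ℝ)
    (hpc : ContinuousOn p (Set.Icc 0 1)) (hpm : StrictMonoOn p (Set.Icc 0 1))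
    (hp0 : p 0 = 0)
    (hU : ContinuousOn U (Set.Icc 0 1))
    (c : ℝ) (hc : U 0 ≤ c) :
    (∃ φ : ℝ → ℝ, PConcave p φ ∧ (∀ t ∈ Set.Icc (0:ℝ) 1, U t ≤ φ t) ∧ c ≤ φ 0) ∧
    PConcave p (Uc p U c) ∧
    ContinuousOn (Uc p U c) (Set.Icc 0 1) ∧
    (∀ r ∈ Set.Icc (0:ℝ) 1, U r ≤ Uc p U c r) ∧
    Uc p U c 0 = c ∧
    Uc p U c 1 = U 1 := by
  have h01 : (0:ℝ) ∈ Icc (0:ℝ) 1 := ⟨le_refl 0, zero_le_one⟩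
  have h11 : (1:ℝ) ∈ Icc (0:ℝ) 1 := ⟨zero_le_one, le_refl 1⟩
  have hL : 0 < p 1 := by
    have := hpm h01 h11 zero_lt_one; rwa [hp0] at this
  have hpmap : ∀ t ∈ Icc (0:ℝ) 1, p t ∈ Icc 0 (p 1) := by
    intro t ht
    constructor
    · rw [← hp0]; exact hpm.monotoneOn h01 ht ht.1
    · exact hpm.monotoneOn ht h11 ht.2
  obtain ⟨tM, htM, hMmax⟩ := isCompact_Icc.exists_isMaxOn ⟨0, h01⟩ hU
  set M := U tM with hMdef
  have hM : ∀ t ∈ Icc (0:ℝ) 1, U t ≤ M := fun t ht => hMmax ht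
  set s0 : ℝ := (U 1 - c) / p 1 with hs0
  set l0 : ℝ → ℝ := fun x => c + s0 * x with hl0
  have hl0L : l0 (p 1) = U 1 := by
    simp only [hl0, hs0]; field_simp; ring
  -- the family of affine majorants
  set A : Set (ℝ × ℝ) := {K | (∀ t ∈ Icc (0:ℝ) 1, U t ≤ K.1 + K.2 * p t) ∧
      (∀ z ∈ Icc (0:ℝ) (p 1), l0 z ≤ K.1 + K.2 * z)} with hA
  set E : ℝ → ℝ := fun x => sInf ((fun K : ℝ × ℝ => K.1 + K.2 * x) '' A) with hE
  have hAne : A.Nonempty := by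
    refine ⟨(max M c, 0), fun t ht => ?_, fun z hz => ?_⟩
    · simpa using le_trans (hM t ht) (le_max_left _ _)
    · have h1 : l0 z ≤ max c (U 1) := by
        rcases le_total c (U 1) with h | h
        · have hs0nn : 0 ≤ s0 := div_nonneg (by linarith) hL.le
          have : s0 * z ≤ s0 * p 1 := mul_le_mul_of_nonneg_left hz.2 hs0nn
          have h2 : l0 z ≤ l0 (p 1) := by simp only [hl0]; linarith
          rw [hl0L] at h2; exact le_trans h2 (le_max_right _ _)
        · have hs0np : s0 ≤ 0 := div_nonpos_of_nonpos_of_nonneg (by linarith) hL.le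
          have : s0 * z ≤ 0 := mul_nonpos_of_nonpos_of_nonneg hs0np hz.1
          simp only [hl0]
          exact le_trans (by linarith) (le_max_left c (U 1))
      have h2 : max c (U 1) ≤ max M c := by
        apply max_le (le_max_right _ _) (le_trans (hM 1 h11) (le_max_left _ _))
      simpa using le_trans h1 h2
  have hEne : ∀ x : ℝ, ((fun K : ℝ × ℝ => K.1 + K.2 * x) '' A).Nonempty :=
    fun x => hAne.image _
  have hEbdd : ∀ x ∈ Icc (0:ℝ) (p 1),
      l0 x ∈ lowerBounds ((fun K : ℝ × ℝ => K.1 + K.2 * x) '' A) := by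
    rintro x hx y ⟨K, hK, rfl⟩
    exact hK.2 x hx
  have hEl0 : ∀ x ∈ Icc (0:ℝ) (p 1), l0 x ≤ E x :=
    fun x hx => le_csInf (hEne x) (hEbdd x hx)
  have hEleA : ∀ K ∈ A, ∀ x ∈ Icc (0:ℝ) (p 1), E x ≤ K.1 + K.2 * x :=
    fun K hK x hx => csInf_le ⟨l0 x, hEbdd x hx⟩ ⟨K, hK, rfl⟩
  have hEU : ∀ t ∈ Icc (0:ℝ) 1, U t ≤ E (p t) := by
    intro t ht
    refine le_csInf (hEne _) ?_
    rintro y ⟨K, hK, rfl⟩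
    exact hK.1 t ht
  have hEconc : ConcaveOn ℝ (Icc 0 (p 1)) E := by
    refine ⟨convex_Icc _ _, fun x hx y hy a b ha hb hab => ?_⟩
    refine le_csInf (hEne _) ?_
    rintro w ⟨K, hK, rfl⟩
    have h1 : E x ≤ K.1 + K.2 * x := hEleA K hK x hx
    have h2 : E y ≤ K.1 + K.2 * y := hEleA K hK y hy
    have h3 : a * E x ≤ a * (K.1 + K.2 * x) := mul_le_mul_of_nonneg_left h1 ha
    have h4 : b * E y ≤ b * (K.1 + K.2 * y) := mul_le_mul_of_nonneg_left h2 hb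
    have key : K.1 + K.2 * (a • x + b • y) = a * (K.1 + K.2 * x) + b * (K.1 + K.2 * y) := by
      simp only [smul_eq_mul]; linear_combination (K.1) * hab.symm
    simp only [smul_eq_mul] at key ⊢
    linarith
  -- approximate affine majorants pinned near the endpoints
  have hA0 : ∀ ε > 0, ∃ K : ℝ, 0 ≤ K ∧ (c + ε, K) ∈ A := by
    intro ε hε
    have hUc0 : ContinuousWithinAt U (Icc 0 1) 0 := hU 0 h01
    rw [Metric.continuousWithinAt_iff] at hUc0
    obtain ⟨δ', hδ'pos, hδ'⟩ := hUc0 ε hε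
    set t0 : ℝ := min (δ' / 2) 1 with ht0
    have ht0pos : 0 < t0 := lt_min (by linarith) zero_lt_one
    have ht0mem : t0 ∈ Icc (0:ℝ) 1 := ⟨ht0pos.le, min_le_right _ _⟩
    have hUsmall : ∀ t ∈ Icc (0:ℝ) 1, t ≤ t0 → U t ≤ c + ε := by
      intro t ht hle
      have hd : dist t 0 < δ' := by
        rw [Real.dist_eq, sub_zero, abs_of_nonneg ht.1]
        exact lt_of_le_of_lt (le_trans hle (min_le_left _ _)) (by linarith)
      have := hδ' ht hd
      rw [Real.dist_eq] at this
      have := abs_lt.1 this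
      linarith [this.1, this.2]
    set δ : ℝ := p t0 with hδ
    have hδpos : 0 < δ := by
      have := hpm h01 ht0mem ht0pos; rwa [hp0] at this
    set K : ℝ := max 0 (max s0 ((M - c) / δ)) with hKdef
    have hKnn : 0 ≤ K := le_max_left _ _
    refine ⟨K, hKnn, fun t ht => ?_, fun z hz => ?_⟩
    · rcases le_total t t0 with h | h
      · have h1 := hUsmall t ht h
        have h2 : 0 ≤ K * p t := mul_nonneg hKnn (hpmap t ht).1
        simp only; linarith
      · have hpt : δ ≤ p t := hpm.monotoneOn ht0mem ht h
        have hK1 : (M - c) / δ ≤ K := le_trans (le_max_right _ _) (le_max_right _ _)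
        have h2 : (M - c) / δ * δ ≤ K * δ := mul_le_mul_of_nonneg_right hK1 hδpos.le
        rw [div_mul_cancel₀ _ (ne_of_gt hδpos)] at h2
        have h3 : K * δ ≤ K * p t := mul_le_mul_of_nonneg_left hpt hKnn
        have h4 := hM t ht
        simp only; linarith
    · have hKs : s0 ≤ K := le_trans (le_max_left _ _) (le_max_right _ _)
      have h1 : s0 * z ≤ K * z := mul_le_mul_of_nonneg_right hKs hz.1
      simp only [hl0]; linarith
  have hAL : ∀ ε > 0, ∃ K : ℝ, 0 ≤ K ∧ (U 1 + ε + K * p 1, -K) ∈ A := by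
    intro ε hε
    have hUc1 : ContinuousWithinAt U (Icc 0 1) 1 := hU 1 h11
    rw [Metric.continuousWithinAt_iff] at hUc1
    obtain ⟨δ', hδ'pos, hδ'⟩ := hUc1 ε hε
    set t1 : ℝ := max (1 - δ' / 2) 0 with ht1
    have ht1mem : t1 ∈ Icc (0:ℝ) 1 := ⟨le_max_right _ _, max_le (by linarith) zero_le_one⟩
    have ht1lt : t1 < 1 := max_lt (by linarith) zero_lt_one
    have hUsmall : ∀ t ∈ Icc (0:ℝ) 1, t1 ≤ t → U t ≤ U 1 + ε := by
      intro t ht hle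
      have hd : dist t 1 < δ' := by
        rw [Real.dist_eq, abs_of_nonpos (by linarith [ht.2])]
        have : 1 - δ' / 2 ≤ t1 := le_max_left _ _
        linarith
      have := hδ' ht hd
      rw [Real.dist_eq] at this
      have := abs_lt.1 this
      linarith [this.1, this.2]
    set δ : ℝ := p 1 - p t1 with hδ
    have hδpos : 0 < δ := sub_pos.2 (hpm ht1mem h11 ht1lt)
    set K : ℝ := max 0 (max (-s0) ((M - U 1) / δ)) with hKdef
    have hKnn : 0 ≤ K := le_max_left _ _
    refine ⟨K, hKnn, fun t ht => ?_, fun z hz => ?_⟩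
    · rcases le_total t1 t with h | h
      · have h1 := hUsmall t ht h
        have h2 : 0 ≤ K * (p 1 - p t) :=
          mul_nonneg hKnn (sub_nonneg.2 (hpmap t ht).2)
        have h3 : K * (p 1 - p t) = K * p 1 - K * p t := by ring
        simp only; linarith
      · have hpt : δ ≤ p 1 - p t := by
          have := hpm.monotoneOn ht ht1mem h; simp only [hδ]; linarith
        have hK1 : (M - U 1) / δ ≤ K := le_trans (le_max_right _ _) (le_max_right _ _)
        have h2 : (M - U 1) / δ * δ ≤ K * δ := mul_le_mul_of_nonneg_right hK1 hδpos.le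
        rw [div_mul_cancel₀ _ (ne_of_gt hδpos)] at h2
        have h3 : K * δ ≤ K * (p 1 - p t) := mul_le_mul_of_nonneg_left hpt hKnn
        have h4 := hM t ht
        have h5 : K * (p 1 - p t) = K * p 1 - K * p t := by ring
        simp only; linarith
    · have hKs : -s0 ≤ K := le_trans (le_max_left _ _) (le_max_right _ _)
      have h1 : 0 ≤ (K + s0) * (p 1 - z) :=
        mul_nonneg (by linarith) (sub_nonneg.2 hz.2)
      have h2 : (K + s0) * (p 1 - z) = K * p 1 - K * z + s0 * p 1 - s0 * z := by ring
      have h3 : c + s0 * p 1 = U 1 := by simpa only [hl0] using hl0L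
      simp only [hl0]; linarith
  have h0mem : (0:ℝ) ∈ Icc (0:ℝ) (p 1) := ⟨le_refl 0, hL.le⟩
  have hLmem : p 1 ∈ Icc (0:ℝ) (p 1) := ⟨hL.le, le_refl _⟩
  have hE0 : E 0 = c := by
    refine le_antisymm ?_ ?_
    · by_contra hlt
      push_neg at hlt
      obtain ⟨K, hKnn, hKA⟩ := hA0 ((E 0 - c) / 2) (by linarith)
      have := hEleA _ hKA 0 h0mem
      simp only [mul_zero, add_zero] at this
      linarith
    · have := hEl0 0 h0mem
      simpa only [hl0, mul_zero, add_zero] using this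
  have hEL : E (p 1) = U 1 := by
    refine le_antisymm ?_ ?_
    · by_contra hlt
      push_neg at hlt
      obtain ⟨K, hKnn, hKA⟩ := hAL ((E (p 1) - U 1) / 2) (by linarith)
      have h1 := hEleA _ hKA (p 1) hLmem
      simp only at h1
      linarith
    · have := hEl0 (p 1) hLmem
      rwa [hl0L] at this
  -- every admissible concave majorant dominates E on the image of p
  have hψgeE : ∀ ψ : ℝ → ℝ, ConcaveOn ℝ (Icc 0 (p 1)) ψ →
      (∀ t ∈ Icc (0:ℝ) 1, U t ≤ ψ (p t)) → c ≤ ψ 0 →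
      ∀ r ∈ Icc (0:ℝ) 1, E (p r) ≤ ψ (p r) := by
    intro ψ hψconc hψU hψ0 r hr
    have hψL : U 1 ≤ ψ (p 1) := hψU 1 h11
    have hψl0 : ∀ z ∈ Icc (0:ℝ) (p 1), l0 z ≤ ψ z := by
      intro z hz
      have ha : 0 ≤ 1 - z / p 1 := by
        rw [sub_nonneg, div_le_one hL]; exact hz.2
      have hb : 0 ≤ z / p 1 := div_nonneg hz.1 hL.le
      have hab : (1 - z / p 1) + z / p 1 = 1 := by ring
      have hcc := hψconc.2 h0mem hLmem ha hb hab
      have hz' : (1 - z / p 1) • (0:ℝ) + (z / p 1) • p 1 = z := by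
        simp only [smul_eq_mul]; field_simp; ring
      rw [hz'] at hcc
      simp only [smul_eq_mul] at hcc
      have heq : l0 z = (1 - z / p 1) * c + (z / p 1) * U 1 := by
        simp only [hl0, hs0]; field_simp; ring
      have h1 : (1 - z / p 1) * c ≤ (1 - z / p 1) * ψ 0 := mul_le_mul_of_nonneg_left hψ0 ha
      have h2 : (z / p 1) * U 1 ≤ (z / p 1) * ψ (p 1) := mul_le_mul_of_nonneg_left hψL hb
      rw [heq]
      exact le_trans (add_le_add h1 h2) hcc
    rcases eq_or_lt_of_le hr.1 with h0 | h0
    · rw [← h0, hp0, hE0]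
      rw [← h0, hp0] at *
      exact hψ0
    rcases eq_or_lt_of_le hr.2 with h1 | h1
    · rw [h1, hEL]
      exact hψL
    · have hx0 : p r ∈ Ioo 0 (p 1) := by
        constructor
        · rw [← hp0]; exact hpm h01 hr h0
        · exact hpm hr h11 h1
      obtain ⟨K, hsup⟩ := exists_support_line ψ hψconc hx0
      have hKA : (ψ (p r) - K * p r, K) ∈ A := by
        constructor
        · intro t ht
          have hs := hsup (p t) (hpmap t ht)
          have h2 := hψU t ht
          have h3 : K * (p t - p r) = K * p t - K * p r := by ring
          simp only; linarith
        · intro z hz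
          have hs := hsup z hz
          have h2 := hψl0 z hz
          have h3 : K * (z - p r) = K * z - K * p r := by ring
          simp only; linarith
      have := hEleA _ hKA (p r) (hpmap r hr)
      simp only at this
      linarith
  -- continuity of E on [0, p 1]
  have hEcont : ContinuousOn E (Icc 0 (p 1)) := by
    intro x hx
    rcases eq_or_lt_of_le hx.1 with h0 | h0
    · subst h0
      rw [Metric.continuousWithinAt_iff]
      intro ε hε
      obtain ⟨K, hKnn, hKA⟩ := hA0 (ε / 4) (by linarith)
      refine ⟨min (ε / (2 * (K + 1))) (ε / (2 * (|s0| + 1))), by positivity, ?_⟩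
      intro y hy hdist
      rw [Real.dist_eq, sub_zero, abs_of_nonneg hy.1] at hdist
      rw [Real.dist_eq, hE0, abs_lt]
      have hupper : E y ≤ c + ε / 4 + K * y := by
        have := hEleA _ hKA y hy; simpa using this
      have hlower : c + s0 * y ≤ E y := by
        have := hEl0 y hy; simpa [hl0] using this
      have hy1 : y * (2 * (K + 1)) < ε :=
        (lt_div_iff₀ (by positivity)).1 (lt_of_lt_of_le hdist (min_le_left _ _))
      have hy2 : y * (2 * (|s0| + 1)) < ε :=
        (lt_div_iff₀ (by positivity)).1 (lt_of_lt_of_le hdist (min_le_right _ _))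
      have habs : -s0 * y ≤ |s0| * y := mul_le_mul_of_nonneg_right (neg_le_abs s0) hy.1
      constructor
      · nlinarith [hy.1, abs_nonneg s0]
      · nlinarith [hy.1, hKnn]
    rcases eq_or_lt_of_le hx.2 with h1 | h1
    · subst h1
      rw [Metric.continuousWithinAt_iff]
      intro ε hε
      obtain ⟨K, hKnn, hKA⟩ := hAL (ε / 4) (by linarith)
      refine ⟨min (ε / (2 * (K + 1))) (ε / (2 * (|s0| + 1))), by positivity, ?_⟩
      intro y hy hdist
      rw [Real.dist_eq, abs_of_nonpos (by linarith [hy.2])] at hdist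
      rw [Real.dist_eq, hEL, abs_lt]
      have hupper : E y ≤ U 1 + ε / 4 + K * p 1 + -K * y := by
        have := hEleA _ hKA y hy; simpa using this
      have hlower : c + s0 * y ≤ E y := by
        have := hEl0 y hy; simpa [hl0] using this
      have hc1 : c + s0 * p 1 = U 1 := by simpa only [hl0] using hl0L
      have hy1 : (p 1 - y) * (2 * (K + 1)) < ε :=
        (lt_div_iff₀ (by positivity)).1 (lt_of_lt_of_le (by linarith) (min_le_left _ _))
      have hy2 : (p 1 - y) * (2 * (|s0| + 1)) < ε :=
        (lt_div_iff₀ (by positivity)).1 (lt_of_lt_of_le (by linarith) (min_le_right _ _))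
      have habs : s0 * (p 1 - y) ≤ |s0| * (p 1 - y) :=
        mul_le_mul_of_nonneg_right (le_abs_self s0) (by linarith [hy.2])
      constructor
      · nlinarith [hy.2, abs_nonneg s0]
      · nlinarith [hy.2, hKnn]
    · have hint := hEconc.continuousOn_interior
      rw [interior_Icc] at hint
      exact ((hint x ⟨h0, h1⟩).continuousAt (Ioo_mem_nhds h0 h1)).continuousWithinAt
  -- identification of Uc with E ∘ p
  have hUcEq : ∀ r ∈ Icc (0:ℝ) 1, Uc p U c r = E (p r) := by
    intro r hr
    have hmem : E (p r) ∈ {y : ℝ | ∃ φ : ℝ → ℝ, PConcave p φ ∧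
        (∀ t ∈ Set.Icc (0:ℝ) 1, U t ≤ φ t) ∧ c ≤ φ 0 ∧ y = φ r} := by
      refine ⟨fun t => E (p t), ⟨E, hEcont, hEconc, fun _ _ => rfl⟩, fun t ht => hEU t ht, ?_, rfl⟩
      show c ≤ E (p 0)
      rw [hp0, hE0]
    have hlb : ∀ y ∈ {y : ℝ | ∃ φ : ℝ → ℝ, PConcave p φ ∧
        (∀ t ∈ Set.Icc (0:ℝ) 1, U t ≤ φ t) ∧ c ≤ φ 0 ∧ y = φ r}, E (p r) ≤ y := by
      rintro y ⟨φ, ⟨ψ, hψc, hψconc, hφψ⟩, hφU, hφ0, rfl⟩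
      rw [hφψ r hr]
      refine hψgeE ψ hψconc ?_ ?_ r hr
      · intro t ht; rw [← hφψ t ht]; exact hφU t ht
      · have h := hφψ 0 h01; rw [hp0] at h; rw [← h]; exact hφ0
    exact le_antisymm (csInf_le ⟨E (p r), hlb⟩ hmem) (le_csInf ⟨_, hmem⟩ hlb)
  refine ⟨?_, ?_, ?_, ?_, ?_, ?_⟩
  · exact ⟨fun _ => max M c, ⟨fun _ => max M c, continuousOn_const,
      concaveOn_const _ (convex_Icc _ _), fun _ _ => rfl⟩,
      fun t ht => le_trans (hM t ht) (le_max_left _ _), le_max_right _ _⟩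
  · exact ⟨E, hEcont, hEconc, hUcEq⟩
  · refine (hEcont.comp hpc fun t ht => hpmap t ht).congr fun r hr => ?_
    exact hUcEq r hr
  · intro r hr; rw [hUcEq r hr]; exact hEU r hr
  · rw [hUcEq 0 h01, hp0, hE0]
  · rw [hUcEq 1 h11, hEL]
end

section
/- Let c ≥ U(0) and suppose that for some interval (r₁,r₂) ⊆ [0,1] one has U⁽ᶜ⁾(r) > U(r) for every r ∈ (r₁,r₂). Then U⁽ᶜ⁾ is an affine transformation of p on [r₁,r₂]: there exist real constants a and b such that U⁽ᶜ⁾(r) = a·p(r) + b for every r ∈ [r₁,r₂]. -/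
open scoped Classical

namespace UcAux

open Set

/-- Admissible majorants. -/
def Adm (p U : ℝ → ℝ) (c : ℝ) (φ : ℝ → ℝ) : Prop :=
  PConcave p φ ∧ (∀ t ∈ Set.Icc (0:ℝ) 1, U t ≤ φ t) ∧ c ≤ φ 0

/-- The defining set of `Uc`. -/
def S (p U : ℝ → ℝ) (c r : ℝ) : Set ℝ :=
  {y : ℝ | ∃ φ : ℝ → ℝ, PConcave p φ ∧ (∀ t ∈ Set.Icc (0:ℝ) 1, U t ≤ φ t) ∧
    c ≤ φ 0 ∧ y = φ r}

lemma Uc_eq (p U : ℝ → ℝ) (c r : ℝ) : Uc p U c r = sInf (S p U c r) := rfl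

lemma mem_S {p U : ℝ → ℝ} {c : ℝ} {φ : ℝ → ℝ} (h : Adm p U c φ) (r : ℝ) :
    φ r ∈ S p U c r := ⟨φ, h.1, h.2.1, h.2.2, rfl⟩

lemma p_mono {p : ℝ → ℝ} (hpm : StrictMonoOn p (Set.Icc 0 1)) {s t : ℝ}
    (hs : s ∈ Icc (0:ℝ) 1) (ht : t ∈ Icc (0:ℝ) 1) (hst : s ≤ t) : p s ≤ p t :=
  hpm.monotoneOn hs ht hst

lemma p_mem {p : ℝ → ℝ} (hpm : StrictMonoOn p (Set.Icc 0 1)) (hp0 : p 0 = 0)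
    {t : ℝ} (ht : t ∈ Icc (0:ℝ) 1) : p t ∈ Icc 0 (p 1) := by
  constructor
  · rw [← hp0]
    exact p_mono hpm ⟨le_refl 0, zero_le_one⟩ ht ht.1
  · exact p_mono hpm ht ⟨zero_le_one, le_refl 1⟩ ht.2

lemma adm_exists {p U : ℝ → ℝ} {c : ℝ} (hU : ContinuousOn U (Set.Icc 0 1)) :
    ∃ K : ℝ, Adm p U c (fun _ => K) := by
  refine ⟨max (sSup (U '' Icc (0:ℝ) 1)) c, ?_, ?_, le_max_right _ _⟩
  · exact ⟨fun _ => max (sSup (U '' Icc (0:ℝ) 1)) c, continuousOn_const,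
      concaveOn_const _ (convex_Icc _ _), fun r _ => rfl⟩
  · intro t ht
    exact (le_csSup (isCompact_Icc.bddAbove_image hU) ⟨t, ht, rfl⟩).trans (le_max_left _ _)

lemma S_nonempty {p U : ℝ → ℝ} {c : ℝ} (hU : ContinuousOn U (Set.Icc 0 1)) (r : ℝ) :
    (S p U c r).Nonempty := by
  obtain ⟨K, hK⟩ := adm_exists (p := p) (c := c) hU
  exact ⟨K, mem_S hK r⟩

lemma bddBelow_S {p U : ℝ → ℝ} {c : ℝ} {r : ℝ} (hr : r ∈ Icc (0:ℝ) 1) :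
    BddBelow (S p U c r) := by
  refine ⟨U r, ?_⟩
  rintro y ⟨φ, h1, h2, h3, rfl⟩
  exact h2 r hr

lemma Uc_le_adm {p U : ℝ → ℝ} {c : ℝ} {φ : ℝ → ℝ} (h : Adm p U c φ) {r : ℝ}
    (hr : r ∈ Icc (0:ℝ) 1) : Uc p U c r ≤ φ r :=
  csInf_le (bddBelow_S hr) (mem_S h r)

lemma U_le_Uc {p U : ℝ → ℝ} {c : ℝ} (hU : ContinuousOn U (Set.Icc 0 1)) {r : ℝ}
    (hr : r ∈ Icc (0:ℝ) 1) : U r ≤ Uc p U c r := by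
  apply le_csInf (S_nonempty hU r)
  rintro y ⟨φ, h1, h2, h3, rfl⟩
  exact h2 r hr

lemma exists_adm_lt {p U : ℝ → ℝ} {c : ℝ} (hU : ContinuousOn U (Set.Icc 0 1)) {r y : ℝ}
    (h : Uc p U c r < y) : ∃ φ, Adm p U c φ ∧ φ r < y := by
  obtain ⟨z, hz, hzy⟩ := exists_lt_of_csInf_lt (S_nonempty hU r) h
  obtain ⟨φ, h1, h2, h3, rfl⟩ := hz
  exact ⟨φ, ⟨h1, h2, h3⟩, hzy⟩

lemma adm_min {p U : ℝ → ℝ} {c : ℝ} {φ₁ φ₂ : ℝ → ℝ} (h₁ : Adm p U c φ₁)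
    (h₂ : Adm p U c φ₂) : Adm p U c (fun t => min (φ₁ t) (φ₂ t)) := by
  obtain ⟨ψ₁, hc₁, hk₁, he₁⟩ := h₁.1
  obtain ⟨ψ₂, hc₂, hk₂, he₂⟩ := h₂.1
  refine ⟨⟨fun x => min (ψ₁ x) (ψ₂ x), ?_, ?_, ?_⟩, ?_, ?_⟩
  · simpa [Pi.inf_def] using hc₁.inf hc₂
  · simpa [Pi.inf_def] using hk₁.inf hk₂
  · intro r hr
    simp only [he₁ r hr, he₂ r hr]
  · intro t ht
    exact le_min (h₁.2.1 t ht) (h₂.2.1 t ht)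
  · exact le_min h₁.2.2 h₂.2.2

lemma concave_three {ψ : ℝ → ℝ} {s : Set ℝ} (h : ConcaveOn ℝ s ψ)
    {u x w : ℝ} (hu : u ∈ s) (hw : w ∈ s) (hux : u ≤ x) (hxw : x ≤ w) (huw : u < w) :
    (w - x) * ψ u + (x - u) * ψ w ≤ (w - u) * ψ x := by
  have hwu : (0:ℝ) < w - u := by linarith
  have hne : w - u ≠ 0 := ne_of_gt hwu
  have ha : 0 ≤ (w - x) / (w - u) := div_nonneg (by linarith) hwu.le
  have hb : 0 ≤ (x - u) / (w - u) := div_nonneg (by linarith) hwu.le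
  have hab : (w - x) / (w - u) + (x - u) / (w - u) = 1 := by field_simp; ring
  have key := h.2 hu hw ha hb hab
  rw [smul_eq_mul, smul_eq_mul, smul_eq_mul, smul_eq_mul] at key
  have hxx : (w - x) / (w - u) * u + (x - u) / (w - u) * w = x := by
    field_simp
    ring
  rw [hxx] at key
  have h2 := mul_le_mul_of_nonneg_left key hwu.le
  calc (w - x) * ψ u + (x - u) * ψ w
      = (w - u) * ((w - x) / (w - u) * ψ u + (x - u) / (w - u) * ψ w) := by
        field_simp
    _ ≤ (w - u) * ψ x := h2

lemma concaveOn_affine {s : Set ℝ} (hs : Convex ℝ s) (m k : ℝ) :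
    ConcaveOn ℝ s (fun x => m * x + k) := by
  refine ⟨hs, ?_⟩
  intro x _ y _ a b _ _ hab
  simp only [smul_eq_mul]
  have : a * (m * x + k) + b * (m * y + k) = m * (a * x + b * y) + (a + b) * k := by ring
  rw [this, hab]
  ring_nf
  exact le_refl _


lemma Uc_three {p U : ℝ → ℝ} {c : ℝ} (hpm : StrictMonoOn p (Set.Icc 0 1))
    (hp0 : p 0 = 0) (hU : ContinuousOn U (Set.Icc 0 1))
    {u x w : ℝ} (hu : u ∈ Icc (0:ℝ) 1) (hx : x ∈ Icc (0:ℝ) 1) (hw : w ∈ Icc (0:ℝ) 1)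
    (hux : u ≤ x) (hxw : x ≤ w) (hpuw : p u < p w) :
    (p w - p x) * Uc p U c u + (p x - p u) * Uc p U c w ≤ (p w - p u) * Uc p U c x := by
  have h1 : 0 < p w - p u := by linarith
  have hpux : p u ≤ p x := p_mono hpm hu hx hux
  have hpxw : p x ≤ p w := p_mono hpm hx hw hxw
  have key : ((p w - p x) * Uc p U c u + (p x - p u) * Uc p U c w) / (p w - p u)
      ≤ Uc p U c x := by
    rw [Uc_eq p U c x]
    apply le_csInf (S_nonempty hU x)
    rintro y ⟨φ, h1', h2', h3', rfl⟩
    have hadm : Adm p U c φ := ⟨h1', h2', h3'⟩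
    obtain ⟨ψ, hψc, hψk, hψe⟩ := h1'
    have h3 := concave_three hψk (p_mem hpm hp0 hu) (p_mem hpm hp0 hw) hpux hpxw hpuw
    have h4 : Uc p U c u ≤ ψ (p u) := by
      rw [← hψe u hu]; exact Uc_le_adm hadm hu
    have h5 : Uc p U c w ≤ ψ (p w) := by
      rw [← hψe w hw]; exact Uc_le_adm hadm hw
    rw [div_le_iff₀ h1, hψe x hx]
    nlinarith [mul_le_mul_of_nonneg_left h4 (by linarith : (0:ℝ) ≤ p w - p x),
      mul_le_mul_of_nonneg_left h5 (by linarith : (0:ℝ) ≤ p x - p u)]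
  rw [div_le_iff₀ h1] at key
  nlinarith [key]

lemma key_ineq {p U : ℝ → ℝ} {c : ℝ}
    (hpc : ContinuousOn p (Set.Icc 0 1)) (hpm : StrictMonoOn p (Set.Icc 0 1))
    (hp0 : p 0 = 0) (hU : ContinuousOn U (Set.Icc 0 1))
    {ru s rw : ℝ} (h0ru : 0 < ru) (hrus : ru ≤ s) (hsrw : s ≤ rw)
    (hruw : ru < rw) (hrw1 : rw ≤ 1)
    (hub : ∀ t ∈ Icc ru rw, U t ≤ min (Uc p U c ru) (Uc p U c rw)) :
    (p rw - p ru) * Uc p U c s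
      ≤ (p rw - p s) * Uc p U c ru + (p s - p ru) * Uc p U c rw := by
  have hru01 : ru ∈ Icc (0:ℝ) 1 := ⟨h0ru.le, (hrus.trans hsrw).trans hrw1⟩
  have hrw01 : rw ∈ Icc (0:ℝ) 1 := ⟨h0ru.le.trans hruw.le, hrw1⟩
  have hs01 : s ∈ Icc (0:ℝ) 1 := ⟨h0ru.le.trans hrus, hsrw.trans hrw1⟩
  have huw : p ru < p rw := hpm hru01 hrw01 hruw
  have hus : p ru ≤ p s := p_mono hpm hru01 hs01 hrus
  have hsw : p s ≤ p rw := p_mono hpm hs01 hrw01 hsrw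
  have hwu0 : 0 < p rw - p ru := by linarith
  have humem : p ru ∈ Icc 0 (p 1) := p_mem hpm hp0 hru01
  have hwmem : p rw ∈ Icc 0 (p 1) := p_mem hpm hp0 hrw01
  have main : ∀ ε > (0:ℝ), (p rw - p ru) * Uc p U c s ≤
      (p rw - p s) * Uc p U c ru + (p s - p ru) * Uc p U c rw + (p rw - p ru) * ε := by
    intro ε hε
    obtain ⟨φ₁, hφ₁, hlt₁⟩ := exists_adm_lt hU
      (show Uc p U c ru < Uc p U c ru + ε by linarith)
    obtain ⟨φ₂, hφ₂, hlt₂⟩ := exists_adm_lt hU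
      (show Uc p U c rw < Uc p U c rw + ε by linarith)
    have hφ : Adm p U c (fun t => min (φ₁ t) (φ₂ t)) := adm_min hφ₁ hφ₂
    obtain ⟨ψ, hψc, hψk, hψe⟩ := hφ.1
    have hψu_lt : ψ (p ru) < Uc p U c ru + ε := by
      rw [← hψe ru hru01]
      exact lt_of_le_of_lt (min_le_left _ _) hlt₁
    have hψw_lt : ψ (p rw) < Uc p U c rw + ε := by
      rw [← hψe rw hrw01]
      exact lt_of_le_of_lt (min_le_right _ _) hlt₂
    have hψu_ge : Uc p U c ru ≤ ψ (p ru) := by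
      rw [← hψe ru hru01]; exact Uc_le_adm hφ hru01
    have hψw_ge : Uc p U c rw ≤ ψ (p rw) := by
      rw [← hψe rw hrw01]; exact Uc_le_adm hφ hrw01
    set sl : ℝ := (ψ (p rw) - ψ (p ru)) / (p rw - p ru) with hsl
    set M : ℝ → ℝ := fun x => sl * x + (ψ (p ru) - p ru * sl) with hM
    have hMaff : ∀ x : ℝ, (p rw - p ru) * M x
        = (p rw - x) * ψ (p ru) + (x - p ru) * ψ (p rw) := by
      intro x
      have hne : p rw - p ru ≠ 0 := ne_of_gt hwu0
      simp only [hM, hsl]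
      field_simp
      ring
    have hMk : ConcaveOn ℝ (Icc 0 (p 1)) M :=
      concaveOn_affine (convex_Icc _ _) sl (ψ (p ru) - p ru * sl)
    have hMc : ContinuousOn M (Icc 0 (p 1)) :=
      ((continuous_const.mul continuous_id).add continuous_const).continuousOn
    have houtside : ∀ x ∈ Icc (0:ℝ) (p 1), (x ≤ p ru ∨ p rw ≤ x) → ψ x ≤ M x := by
      intro x hx hcase
      rcases hcase with hcl | hcr
      · have h3 := concave_three hψk hx hwmem hcl huw.le
          (lt_of_le_of_lt hcl huw)
        nlinarith [hMaff x]
      · have h3 := concave_three hψk humem hx huw.le hcr (lt_of_lt_of_le huw hcr)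
        nlinarith [hMaff x]
    have hMmin : ∀ x ∈ Icc (p ru) (p rw), min (ψ (p ru)) (ψ (p rw)) ≤ M x := by
      intro x hx
      have h4 := hMaff x
      nlinarith [min_le_left (ψ (p ru)) (ψ (p rw)), min_le_right (ψ (p ru)) (ψ (p rw)),
        hx.1, hx.2]
    have hAdm' : Adm p U c (fun t => min (ψ (p t)) (M (p t))) := by
      refine ⟨⟨fun x => min (ψ x) (M x), ?_, ?_, fun r _ => rfl⟩, ?_, ?_⟩
      · simpa [Pi.inf_def] using hψc.inf hMc
      · simpa [Pi.inf_def] using hψk.inf hMk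
      · intro t ht
        have hUψ : U t ≤ ψ (p t) := by
          rw [← hψe t ht]
          exact hφ.2.1 t ht
        refine le_min hUψ ?_
        by_cases hcase : t ∈ Icc ru rw
        · calc U t ≤ min (Uc p U c ru) (Uc p U c rw) := hub t hcase
            _ ≤ min (ψ (p ru)) (ψ (p rw)) := min_le_min hψu_ge hψw_ge
            _ ≤ M (p t) := hMmin _ ⟨p_mono hpm hru01 ht hcase.1, p_mono hpm ht hrw01 hcase.2⟩
        · have ht' : t < ru ∨ rw < t := by
            by_contra hno
            push_neg at hno
            exact hcase ⟨hno.1, hno.2⟩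
          have : p t ≤ p ru ∨ p rw ≤ p t := by
            rcases ht' with h | h
            · exact Or.inl (p_mono hpm ht hru01 h.le)
            · exact Or.inr (p_mono hpm hrw01 ht h.le)
          exact hUψ.trans (houtside (p t) (p_mem hpm hp0 ht) this)
      · have h0mem : (0:ℝ) ∈ Icc (0:ℝ) 1 := ⟨le_refl 0, zero_le_one⟩
        have hc0 : c ≤ ψ (p 0) := by
          rw [← hψe 0 h0mem]; exact hφ.2.2
        have hle : ψ (p 0) ≤ M (p 0) := by
          apply houtside (p 0) (p_mem hpm hp0 h0mem)
          exact Or.inl (p_mono hpm h0mem hru01 h0ru.le)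
        exact le_min hc0 (hc0.trans hle)
    have hle : Uc p U c s ≤ min (ψ (p s)) (M (p s)) := Uc_le_adm hAdm' hs01
    have h6 : Uc p U c s ≤ M (p s) := hle.trans (min_le_right _ _)
    have h7 := hMaff (p s)
    nlinarith [mul_le_mul_of_nonneg_left h6 hwu0.le,
      mul_le_mul_of_nonneg_left hψu_lt.le (by linarith : (0:ℝ) ≤ p rw - p s),
      mul_le_mul_of_nonneg_left hψw_lt.le (by linarith : (0:ℝ) ≤ p s - p ru)]
  by_contra hcon
  push_neg at hcon
  set gap := (p rw - p ru) * Uc p U c s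
    - ((p rw - p s) * Uc p U c ru + (p s - p ru) * Uc p U c rw) with hgap
  have hgap0 : 0 < gap := by rw [hgap]; linarith
  have h8 := main (gap / (2 * (p rw - p ru))) (by positivity)
  have h9 : (p rw - p ru) * (gap / (2 * (p rw - p ru))) = gap / 2 := by
    field_simp
  rw [h9] at h8
  rw [hgap] at h8 hgap0
  linarith

lemma F_usc_lt {p U : ℝ → ℝ} {c : ℝ}
    (hpc : ContinuousOn p (Set.Icc 0 1)) (hpm : StrictMonoOn p (Set.Icc 0 1))
    (hp0 : p 0 = 0) (hU : ContinuousOn U (Set.Icc 0 1))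
    (A B m : ℝ) {s : ℝ} (hs : s ∈ Icc (0:ℝ) 1)
    (h : Uc p U c s - (A * p s + B) < m) :
    ∃ δ > 0, ∀ t ∈ Icc (0:ℝ) 1, |t - s| < δ → Uc p U c t - (A * p t + B) < m := by
  set ε := (m - (Uc p U c s - (A * p s + B))) / 2 with hε
  have hε0 : 0 < ε := by rw [hε]; linarith
  obtain ⟨φ, hφ, hlt⟩ := exists_adm_lt hU (show Uc p U c s < Uc p U c s + ε by linarith)
  obtain ⟨ψ, hψc, hψk, hψe⟩ := hφ.1
  have hmaps : MapsTo p (Icc (0:ℝ) 1) (Icc 0 (p 1)) := fun t ht => p_mem hpm hp0 ht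
  have hcont : ContinuousOn (fun t => ψ (p t) - A * p t) (Icc (0:ℝ) 1) :=
    (hψc.comp hpc hmaps).sub (continuousOn_const.mul hpc)
  have hcw := hcont s hs
  rw [Metric.continuousWithinAt_iff] at hcw
  obtain ⟨δ, hδ0, hδ⟩ := hcw ε hε0
  refine ⟨δ, hδ0, fun t ht hts => ?_⟩
  have h8 := hδ ht (by rwa [Real.dist_eq])
  rw [Real.dist_eq] at h8
  have h9 : Uc p U c t ≤ ψ (p t) := by
    rw [← hψe t ht]; exact Uc_le_adm hφ ht
  have h10 : ψ (p s) < Uc p U c s + ε := by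
    rw [← hψe s hs]; exact hlt
  have h11 := abs_lt.1 h8
  linarith [h11.2, h9, h10, hε.ge, hε.le]

end UcAux

set_option maxHeartbeats 1000000 in
open UcAux Set in
/-- Wherever `U⁽ᶜ⁾ > U` on an open subinterval, `U⁽ᶜ⁾` is an affine transformation of
the scale function `p` on the closed subinterval. -/
theorem Uc_affine_on_noncontact_interval (p U : ℝ → ℝ)
    (hpc : ContinuousOn p (Set.Icc 0 1)) (hpm : StrictMonoOn p (Set.Icc 0 1))
    (hp0 : p 0 = 0)
    (hU : ContinuousOn U (Set.Icc 0 1))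
    (c : ℝ) (hc : U 0 ≤ c)
    (r₁ r₂ : ℝ) (hr₁ : 0 ≤ r₁) (hr₁₂ : r₁ < r₂) (hr₂ : r₂ ≤ 1)
    (hgt : ∀ r ∈ Set.Ioo r₁ r₂, U r < Uc p U c r) :
    ∃ a b : ℝ, ∀ r ∈ Set.Icc r₁ r₂, Uc p U c r = a * p r + b := by
  have hsub : Icc r₁ r₂ ⊆ Icc (0:ℝ) 1 := fun t ht => ⟨hr₁.trans ht.1, ht.2.trans hr₂⟩
  have h1mem : r₁ ∈ Icc (0:ℝ) 1 := ⟨hr₁, hr₁₂.le.trans hr₂⟩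
  have h2mem : r₂ ∈ Icc (0:ℝ) 1 := ⟨hr₁.trans hr₁₂.le, hr₂⟩
  have hx12 : p r₁ < p r₂ := hpm h1mem h2mem hr₁₂
  have hx12' : (0:ℝ) < p r₂ - p r₁ := by linarith
  have hne12 : p r₂ - p r₁ ≠ 0 := ne_of_gt hx12'
  obtain ⟨A, hA⟩ : ∃ A : ℝ, A = (Uc p U c r₂ - Uc p U c r₁) / (p r₂ - p r₁) := ⟨_, rfl⟩
  obtain ⟨B, hB⟩ : ∃ B : ℝ, B = Uc p U c r₁ - A * p r₁ := ⟨_, rfl⟩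
  have hlr₁ : A * p r₁ + B = Uc p U c r₁ := by rw [hB]; ring
  have hlr₂ : A * p r₂ + B = Uc p U c r₂ := by
    rw [hB, hA]; field_simp; ring
  refine ⟨A, B, fun r hr => ?_⟩
  have hr01 : r ∈ Icc (0:ℝ) 1 := hsub hr
  have hlower : ∀ t ∈ Icc r₁ r₂, A * p t + B ≤ Uc p U c t := by
    intro t ht
    have h3 := Uc_three (c := c) hpm hp0 hU h1mem (hsub ht) h2mem ht.1 ht.2 hx12
    have h4 : (A * p t + B) * (p r₂ - p r₁)
        = (p r₂ - p t) * Uc p U c r₁ + (p t - p r₁) * Uc p U c r₂ := by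
      rw [hB, hA]; field_simp; ring
    nlinarith [h3, h4]
  have hupper : Uc p U c r ≤ A * p r + B := by
    rcases eq_or_lt_of_le hr.1 with he | hlt1
    · rw [← he, hlr₁]
    rcases eq_or_lt_of_le hr.2 with he2 | hlt2
    · rw [he2, hlr₂]
    by_contra hcon
    push_neg at hcon
    obtain ⟨F, hF⟩ : ∃ F : ℝ → ℝ, F = fun t => Uc p U c t - (A * p t + B) := ⟨_, rfl⟩
    have hF1 : F r₁ = 0 := by rw [hF]; simp only; rw [hlr₁]; ring
    have hF2 : F r₂ = 0 := by rw [hF]; simp only; rw [hlr₂]; ring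
    have hFr : 0 < F r := by rw [hF]; simp only; linarith
    obtain ⟨K, hK⟩ := adm_exists (p := p) (c := c) hU
    have hbdd : BddAbove (F '' Icc r₁ r₂) := by
      refine ⟨K + |A| * p 1 + |B|, ?_⟩
      rintro y ⟨t, ht, rfl⟩
      have h5 : Uc p U c t ≤ K := Uc_le_adm hK (hsub ht)
      have h6 : p t ∈ Icc 0 (p 1) := p_mem hpm hp0 (hsub ht)
      have e1 : |A * p t| = |A| * p t := by rw [abs_mul, abs_of_nonneg h6.1]
      have e2 : |A| * p t ≤ |A| * p 1 := mul_le_mul_of_nonneg_left h6.2 (abs_nonneg A)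
      have e3 := neg_abs_le (A * p t)
      have e4 := neg_abs_le B
      rw [hF]; simp only
      linarith
    have hneI : (F '' Icc r₁ r₂).Nonempty := ⟨F r₁, ⟨r₁, left_mem_Icc.2 hr₁₂.le, rfl⟩⟩
    obtain ⟨μ, hμ⟩ : ∃ μ : ℝ, μ = sSup (F '' Icc r₁ r₂) := ⟨_, rfl⟩
    have hFleμ : ∀ t ∈ Icc r₁ r₂, F t ≤ μ := by
      intro t ht
      rw [hμ]
      exact le_csSup hbdd ⟨t, ht, rfl⟩
    have hμpos : 0 < μ := lt_of_lt_of_le hFr (hFleμ r hr)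
    -- max attainment via subsequences
    have hseq : ∀ n : ℕ, ∃ t, t ∈ Icc r₁ r₂ ∧ μ - 1/((n:ℝ)+1) < F t := by
      intro n
      have h0 : (0:ℝ) < 1/((n:ℝ)+1) := by positivity
      obtain ⟨y, hy, hylt⟩ := exists_lt_of_lt_csSup hneI
        (show μ - 1/((n:ℝ)+1) < sSup (F '' Icc r₁ r₂) by rw [← hμ]; linarith)
      obtain ⟨t, ht, rfl⟩ := hy
      exact ⟨t, ht, hylt⟩
    choose tt htt hFtt using hseq
    obtain ⟨rs, hrs, k, hkmono, hklim⟩ := isCompact_Icc.tendsto_subseq htt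
    have hrs01 : rs ∈ Icc (0:ℝ) 1 := hsub hrs
    have hFrs : μ ≤ F rs := by
      by_contra hFs
      push_neg at hFs
      obtain ⟨m, hm⟩ : ∃ m : ℝ, m = (F rs + μ)/2 := ⟨_, rfl⟩
      have hmlt : m < μ := by rw [hm]; linarith
      have hcond : Uc p U c rs - (A * p rs + B) < m := by
        have h7 : F rs < m := by rw [hm]; linarith
        rw [hF] at h7; simpa only using h7
      obtain ⟨δ, hδ0, hδ⟩ := F_usc_lt (c := c) hpc hpm hp0 hU A B m hrs01 hcond
      obtain ⟨N, hN⟩ := Metric.tendsto_atTop.mp hklim δ hδ0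
      obtain ⟨N₂, hN₂⟩ := exists_nat_gt (2/(μ - m))
      have h1' := hN (max N N₂) (le_max_left _ _)
      rw [Function.comp_apply, Real.dist_eq] at h1'
      have h2' := hδ (tt (k (max N N₂))) (hsub (htt (k (max N N₂)))) h1'
      have h3' := hFtt (k (max N N₂))
      rw [hF] at h3'; simp only at h3'
      have hkn : ((max N N₂ : ℕ):ℝ) ≤ (k (max N N₂) : ℝ) := Nat.cast_le.mpr hkmono.le_apply
      have hmpos : 0 < μ - m := by linarith
      have hN₂' : 2/(μ - m) < ((max N N₂ : ℕ):ℝ) :=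
        lt_of_lt_of_le hN₂ (Nat.cast_le.mpr (le_max_right _ _))
      have hfrac : 1/((k (max N N₂) : ℝ)+1) < μ - m := by
        have hpos2 : (0:ℝ) < (k (max N N₂) : ℝ) + 1 := by positivity
        rw [div_lt_iff₀ hpos2]
        have h2lt : 2/(μ - m) < (k (max N N₂) : ℝ) + 1 := by linarith
        have h2lt' := (div_lt_iff₀ hmpos).mp h2lt
        linarith
      linarith
    have hFrs' : F rs = μ := le_antisymm (hFleμ rs hrs) hFrs
    have hrs1 : r₁ < rs := by
      rcases eq_or_lt_of_le hrs.1 with he | h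
      · exfalso; rw [← he] at hFrs'; rw [hF1] at hFrs'; linarith
      · exact h
    have hrs2 : rs < r₂ := by
      rcases eq_or_lt_of_le hrs.2 with he | h
      · exfalso; rw [he] at hFrs'; rw [hF2] at hFrs'; linarith
      · exact h
    obtain ⟨T, hT⟩ : ∃ T : Set ℝ, T = {t : ℝ | t ∈ Icc r₁ rs ∧ μ ≤ F t} := ⟨_, rfl⟩
    have hrsT : rs ∈ T := by rw [hT]; exact ⟨right_mem_Icc.2 hrs.1, hFrs'.ge⟩
    have hTne : T.Nonempty := ⟨rs, hrsT⟩
    have hTbdd : BddBelow T := by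
      rw [hT]; exact ⟨r₁, fun x hx => hx.1.1⟩
    obtain ⟨t₀, ht₀⟩ : ∃ t₀ : ℝ, t₀ = sInf T := ⟨_, rfl⟩
    have ht₀rs : t₀ ≤ rs := by rw [ht₀]; exact csInf_le hTbdd hrsT
    have ht₀r₁ : r₁ ≤ t₀ := by
      rw [ht₀]
      refine le_csInf hTne fun x hx => ?_
      rw [hT] at hx; exact hx.1.1
    have ht₀gt : r₁ < t₀ := by
      have hcond : Uc p U c r₁ - (A * p r₁ + B) < μ := by
        have h7 : F r₁ < μ := by rw [hF1]; linarith
        rw [hF] at h7; simpa only using h7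
      obtain ⟨δ₁, hδ₁0, hδ₁⟩ := F_usc_lt (c := c) hpc hpm hp0 hU A B μ h1mem hcond
      have hTlb : ∀ x ∈ T, r₁ + δ₁ ≤ x := by
        intro x hx
        rw [hT] at hx
        by_contra hxc
        push_neg at hxc
        have hx01 : x ∈ Icc (0:ℝ) 1 := hsub ⟨hx.1.1, hx.1.2.trans hrs.2⟩
        have habs : |x - r₁| < δ₁ := by
          rw [abs_lt]; constructor
          · linarith [hx.1.1]
          · linarith [hx.1.1]
        have h7 := hδ₁ x hx01 habs
        have h8 := hx.2
        rw [hF] at h8; simp only at h8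
        linarith
      have h9 : r₁ + δ₁ ≤ sInf T := le_csInf hTne hTlb
      rw [← ht₀] at h9
      linarith
    have ht₀mem12 : t₀ ∈ Icc r₁ r₂ := ⟨ht₀r₁, ht₀rs.trans hrs2.le⟩
    have ht₀01 : t₀ ∈ Icc (0:ℝ) 1 := hsub ht₀mem12
    have hFt₀le : F t₀ ≤ μ := hFleμ t₀ ht₀mem12
    have hFt₀ : F t₀ = μ := by
      refine le_antisymm hFt₀le ?_
      by_contra hc2
      push_neg at hc2
      have hcond : Uc p U c t₀ - (A * p t₀ + B) < μ := by
        rw [hF] at hc2; simpa only using hc2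
      obtain ⟨δ₂, hδ₂0, hδ₂⟩ := F_usc_lt (c := c) hpc hpm hp0 hU A B μ ht₀01 hcond
      obtain ⟨x, hxT, hxlt⟩ := exists_lt_of_csInf_lt hTne
        (show sInf T < t₀ + δ₂ by rw [← ht₀]; linarith)
      have hxge : t₀ ≤ x := by rw [ht₀]; exact csInf_le hTbdd hxT
      rw [hT] at hxT
      have hx01 : x ∈ Icc (0:ℝ) 1 := hsub ⟨hxT.1.1, hxT.1.2.trans hrs2.le⟩
      have habs : |x - t₀| < δ₂ := by rw [abs_lt]; constructor <;> linarith
      have h7 := hδ₂ x hx01 habs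
      have h8 := hxT.2
      rw [hF] at h8; simp only at h8
      linarith
    have ht₀lt2 : t₀ < r₂ := lt_of_le_of_lt ht₀rs hrs2
    -- Step C at t₀
    have hUt₀ : U t₀ < Uc p U c t₀ := hgt t₀ ⟨ht₀gt, ht₀lt2⟩
    obtain ⟨γ, hγ⟩ : ∃ γ : ℝ, γ = (Uc p U c t₀ - U t₀)/3 := ⟨_, rfl⟩
    have hγ0 : 0 < γ := by rw [hγ]; linarith
    have hUcw := hU t₀ ht₀01
    rw [Metric.continuousWithinAt_iff] at hUcw
    obtain ⟨δU, hδU0, hδU⟩ := hUcw γ hγ0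
    have hpt₀1 : p r₁ < p t₀ := hpm h1mem ht₀01 ht₀gt
    have hpt₀2 : p t₀ < p r₂ := hpm ht₀01 h2mem ht₀lt2
    obtain ⟨C₁, hC₁⟩ : ∃ x : ℝ, x = |Uc p U c t₀ - Uc p U c r₁| + 1 := ⟨_, rfl⟩
    obtain ⟨C₂, hC₂⟩ : ∃ x : ℝ, x = |Uc p U c t₀ - Uc p U c r₂| + 1 := ⟨_, rfl⟩
    have hC₁0 : 0 < C₁ := by rw [hC₁]; positivity
    have hC₂0 : 0 < C₂ := by rw [hC₂]; positivity
    obtain ⟨ρ, hρ⟩ : ∃ x : ℝ, x = min (γ * (p t₀ - p r₁)/C₁) (γ * (p r₂ - p t₀)/C₂) := ⟨_, rfl⟩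
    have hρ0 : 0 < ρ := by
      rw [hρ]
      exact lt_min (div_pos (mul_pos hγ0 (by linarith)) hC₁0)
        (div_pos (mul_pos hγ0 (by linarith)) hC₂0)
    have hub1 : ρ * C₁ ≤ γ * (p t₀ - p r₁) := by
      rw [hρ]
      have h := mul_le_mul_of_nonneg_right
        (min_le_left (γ * (p t₀ - p r₁)/C₁) (γ * (p r₂ - p t₀)/C₂)) hC₁0.le
      rwa [div_mul_cancel₀ _ (ne_of_gt hC₁0)] at h
    have hub2 : ρ * C₂ ≤ γ * (p r₂ - p t₀) := by
      rw [hρ]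
      have h := mul_le_mul_of_nonneg_right
        (min_le_right (γ * (p t₀ - p r₁)/C₁) (γ * (p r₂ - p t₀)/C₂)) hC₂0.le
      rwa [div_mul_cancel₀ _ (ne_of_gt hC₂0)] at h
    have hpcw := hpc t₀ ht₀01
    rw [Metric.continuousWithinAt_iff] at hpcw
    obtain ⟨δp, hδp0, hδp⟩ := hpcw ρ hρ0
    obtain ⟨δ, hδdef⟩ : ∃ x : ℝ, x = min δU δp := ⟨_, rfl⟩
    have hδ0 : 0 < δ := by rw [hδdef]; exact lt_min hδU0 hδp0
    have hδle1 : δ ≤ δU := by rw [hδdef]; exact min_le_left _ _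
    have hδle2 : δ ≤ δp := by rw [hδdef]; exact min_le_right _ _
    -- right point rb
    obtain ⟨rb, hrb⟩ : ∃ x : ℝ, x = min (t₀ + δ/2) ((t₀ + r₂)/2) := ⟨_, rfl⟩
    have hrbgt : t₀ < rb := by
      rw [hrb]; exact lt_min (by linarith) (by linarith)
    have hrblt : rb < r₂ := by
      rw [hrb]; exact lt_of_le_of_lt (min_le_right _ _) (by linarith)
    have hrble : rb ≤ t₀ + δ/2 := by rw [hrb]; exact min_le_left _ _
    have hrbδ : rb - t₀ < δ := by linarith
    have hrb01 : rb ∈ Icc (0:ℝ) 1 := ⟨by linarith [ht₀01.1], by linarith [h2mem.2]⟩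
    -- left point ru
    obtain ⟨ru, hru⟩ : ∃ x : ℝ, x = (max r₁ (t₀ - δ) + t₀)/2 := ⟨_, rfl⟩
    have hmaxlt : max r₁ (t₀ - δ) < t₀ := max_lt ht₀gt (by linarith)
    have hmax1 : r₁ ≤ max r₁ (t₀ - δ) := le_max_left _ _
    have hmax2 : t₀ - δ ≤ max r₁ (t₀ - δ) := le_max_right _ _
    have hrult : ru < t₀ := by rw [hru]; linarith
    have hrugt : r₁ < ru := by rw [hru]; linarith
    have hruδ : t₀ - ru < δ := by rw [hru]; linarith
    have hru01 : ru ∈ Icc (0:ℝ) 1 := ⟨by linarith, by linarith [ht₀01.2]⟩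
    have hpruδ : |p ru - p t₀| < ρ := by
      have h7 := hδp hru01 (show dist ru t₀ < δp by
        rw [Real.dist_eq, abs_lt]; constructor <;> linarith)
      rwa [Real.dist_eq] at h7
    have hprbδ : |p rb - p t₀| < ρ := by
      have h7 := hδp hrb01 (show dist rb t₀ < δp by
        rw [Real.dist_eq, abs_lt]; constructor <;> linarith)
      rwa [Real.dist_eq] at h7
    have hpru : p ru < p t₀ := hpm hru01 ht₀01 hrult
    have hprb : p t₀ < p rb := hpm ht₀01 hrb01 hrbgt
    -- lower bounds on Uc ru and Uc rb
    have hDru : Uc p U c t₀ - γ ≤ Uc p U c ru := by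
      have h3 := Uc_three (c := c) hpm hp0 hU h1mem hru01 ht₀01 hrugt.le hrult.le hpt₀1
      have hDd1 : Uc p U c t₀ - Uc p U c r₁ ≤ C₁ := by
        rw [hC₁]; linarith [le_abs_self (Uc p U c t₀ - Uc p U c r₁)]
      have m1 : (p t₀ - p ru) * (Uc p U c t₀ - Uc p U c r₁) ≤ (p t₀ - p ru) * C₁ :=
        mul_le_mul_of_nonneg_left hDd1 (by linarith)
      have m2 : (p t₀ - p ru) * C₁ ≤ ρ * C₁ :=
        mul_le_mul_of_nonneg_right (by linarith [(abs_lt.1 hpruδ).1]) hC₁0.le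
      have hkey1 : (p t₀ - p r₁) * (Uc p U c t₀ - γ) ≤ (p t₀ - p r₁) * Uc p U c ru := by
        linarith [h3, m1, m2, hub1]
      exact le_of_mul_le_mul_left hkey1 (by linarith)
    have hDrb : Uc p U c t₀ - γ ≤ Uc p U c rb := by
      have h3 := Uc_three (c := c) hpm hp0 hU ht₀01 hrb01 h2mem hrbgt.le hrblt.le hpt₀2
      have hDd2 : Uc p U c t₀ - Uc p U c r₂ ≤ C₂ := by
        rw [hC₂]; linarith [le_abs_self (Uc p U c t₀ - Uc p U c r₂)]
      have m1 : (p rb - p t₀) * (Uc p U c t₀ - Uc p U c r₂) ≤ (p rb - p t₀) * C₂ :=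
        mul_le_mul_of_nonneg_left hDd2 (by linarith)
      have m2 : (p rb - p t₀) * C₂ ≤ ρ * C₂ :=
        mul_le_mul_of_nonneg_right (by linarith [(abs_lt.1 hprbδ).2]) hC₂0.le
      have hkey1 : (p r₂ - p t₀) * (Uc p U c t₀ - γ) ≤ (p r₂ - p t₀) * Uc p U c rb := by
        linarith [h3, m1, m2, hub2]
      exact le_of_mul_le_mul_left hkey1 (by linarith)
    -- U bound on [ru, rb]
    have hub : ∀ t ∈ Icc ru rb, U t ≤ min (Uc p U c ru) (Uc p U c rb) := by
      intro t htm
      have ht01 : t ∈ Icc (0:ℝ) 1 := ⟨by linarith [htm.1, hru01.1], by linarith [htm.2, hrb01.2]⟩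
      have habs : dist t t₀ < δU := by
        rw [Real.dist_eq, abs_lt]
        constructor
        · linarith [htm.1]
        · linarith [htm.2]
      have hUt := hδU ht01 habs
      rw [Real.dist_eq] at hUt
      have hUt' : U t < U t₀ + γ := by linarith [(abs_lt.1 hUt).2]
      have hU3 : U t₀ = Uc p U c t₀ - 3*γ := by rw [hγ]; ring
      exact le_min (by linarith) (by linarith)
    -- key inequality
    have hkey := key_ineq (c := c) hpc hpm hp0 hU (show 0 < ru by linarith)
      hrult.le hrbgt.le (hrult.trans hrbgt) hrb01.2 hub
    have haff : (p rb - p ru) * (A * p t₀ + B)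
        = (p rb - p t₀) * (A * p ru + B) + (p t₀ - p ru) * (A * p rb + B) := by ring
    have hFrble : F rb ≤ μ := hFleμ rb ⟨by linarith, hrblt.le⟩
    have hFruge : μ ≤ F ru := by
      have hFt₀' : Uc p U c t₀ - (A * p t₀ + B) = μ := by
        rw [hF] at hFt₀; simpa only using hFt₀
      have hFrble' : Uc p U c rb - (A * p rb + B) ≤ μ := by
        rw [hF] at hFrble; simpa only using hFrble
      have hmul : (p t₀ - p ru) * (Uc p U c rb - (A * p rb + B)) ≤ (p t₀ - p ru) * μ :=
        mul_le_mul_of_nonneg_left hFrble' (by linarith)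
      have hmul2 : (p rb - p ru) * (Uc p U c t₀ - (A * p t₀ + B)) = (p rb - p ru) * μ := by
        rw [hFt₀']
      have e1 : (p rb - p t₀) * μ ≤ (p rb - p t₀) * (Uc p U c ru - (A * p ru + B)) := by
        linarith [hkey, haff, hmul, hmul2]
      have e2 := le_of_mul_le_mul_left e1 (by linarith)
      rw [hF]; simpa only using e2
    have hruT : ru ∈ T := by
      rw [hT]; exact ⟨⟨hrugt.le, hrult.le.trans ht₀rs⟩, hFruge⟩
    have hcontra : t₀ ≤ ru := by rw [ht₀]; exact csInf_le hTbdd hruT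
    linarith
  exact le_antisymm hupper (hlower r hr)
end
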